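/- Fractional Rademacher complexity of the kernel-based hypothesis class for the pairwise loss: let ℍ be a real Hilbert space and Φ : 𝒳 → ℍ with ⟨Φ(x), Φ(x)⟩ ≤ r² for all x ∈ 𝒳. Let K ≥ 1 and n ≥ 2, and for each k ∈ [K] let n_k⁺, n_k⁻ ≥ 1 with n_k⁺ + n_k⁻ = n, τ_k = min(n_k⁺, n_k⁻)/n, m_k = n_k⁺ n_k⁻, and let (x⁺_{ki}, x⁻_{ki})_{i∈[m_k]} be points of 𝒳 × 𝒳. Let {(I_{kj}, ω_{kj})}_{j∈[J_k]} be a family with I_{kj} ⊆ [m_k] and ω_{kj} > 0 such that ∑_{j : i ∈ I_{kj}} ω_{kj} = 1 for every i ∈ [m_k] and ∑_{j∈[J_k]} ω_{kj} = max(n_k⁺, n_k⁻). Then (1/K) ∑_{k=1}^K 2^{−m_k} ∑_{σ∈{−1,1}^{m_k}} (1/m_k) ∑_{j∈[J_k]} ω_{kj} · sup_{w∈ℍ, ‖w‖≤B} ∑_{i∈I_{kj}} σ_i ⟨w, Φ(x⁺_{ki}) − Φ(x⁻_{ki})⟩ ≤ (2 B r / √n) · ( (1/K) ∑_{k=1}^K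 √(1/τ_k) ). -/

import Mathlib

open scoped BigOperators RealInnerProductSpace

private lemma rad_diag {m : ℕ} (i : Fin m) :
    ∑ σ : Fin m → Bool,
      ((if σ i then (1:ℝ) else -1) * (if σ i then (1:ℝ) else -1)) = 2 ^ m := by
  have h : ∀ σ : Fin m → Bool,
      ((if σ i then (1:ℝ) else -1) * (if σ i then (1:ℝ) else -1)) = 1 := by
    intro σ; cases σ i <;> norm_num
  rw [Finset.sum_congr rfl fun σ _ => h σ]
  simp [Finset.card_univ]

private lemma rad_orth {m : ℕ} {i i' : Fin m} (h : i ≠ i') :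
    ∑ σ : Fin m → Bool,
      ((if σ i then (1:ℝ) else -1) * (if σ i' then (1:ℝ) else -1)) = 0 := by
  classical
  set f : (Fin m → Bool) → ℝ := fun σ =>
    (if σ i then (1:ℝ) else -1) * (if σ i' then (1:ℝ) else -1) with hf
  set g : (Fin m → Bool) → (Fin m → Bool) := fun σ => Function.update σ i (!σ i) with hg
  have hinv : Function.Involutive g := by
    intro σ
    funext x
    rcases eq_or_ne x i with rfl | hx
    · simp [hg]
    · simp [hg, Function.update_of_ne hx]
  have h1 : ∑ σ, f (g σ) = ∑ σ, f σ := Equiv.sum_comp hinv.toPerm f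
  have h2 : ∀ σ : Fin m → Bool, f (g σ) = - f σ := by
    intro σ
    have hii : g σ i' = σ i' := Function.update_of_ne (Ne.symm h) _ _
    have hi : g σ i = !σ i := Function.update_self _ _ _
    simp only [hf, hii, hi]
    cases σ i <;> cases σ i' <;> norm_num
  have h3 : (∑ σ, f σ) + (∑ σ, f σ) = 0 := by
    nth_rewrite 1 [← h1]
    rw [← Finset.sum_add_distrib]
    rw [Finset.sum_congr rfl fun σ _ => by rw [h2 σ, neg_add_cancel]]
    exact Finset.sum_const_zero
  linarith

/-- **Fractional Rademacher complexity of the kernel-based hypothesis class for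
the pairwise loss** (Lemma `lem:app_frac_rade_kernel_hypothesis_pairwise`),
with the Rademacher expectation realized as a finite average over sign vectors. -/
theorem fracRad_kernel_pairwise
    {H X : Type*} [NormedAddCommGroup H] [InnerProductSpace ℝ H]
    (Φ : X → H) (r : ℝ) (hr : 0 < r) (hΦ : ∀ x, ⟪Φ x, Φ x⟫ ≤ r ^ 2)
    (K n : ℕ) (hK : 1 ≤ K) (hn : 2 ≤ n)
    (np nm : Fin K → ℕ) (hnp : ∀ k, 1 ≤ np k) (hnm : ∀ k, 1 ≤ nm k)
    (hsum : ∀ k, np k + nm k = n)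
    (xs : (k : Fin K) → Fin (np k * nm k) → X × X)
    (J : Fin K → ℕ)
    (I : (k : Fin K) → Fin (J k) → Finset (Fin (np k * nm k)))
    (w : (k : Fin K) → Fin (J k) → ℝ) (hw : ∀ k j, 0 < w k j)
    (hcover : ∀ k (i : Fin (np k * nm k)),
      ∑ j ∈ Finset.univ.filter (fun j => i ∈ I k j), w k j = 1)
    (hchrom : ∀ k, ∑ j, w k j = (max (np k) (nm k) : ℝ))
    (B : ℝ) (hB : 0 ≤ B) :
    (K : ℝ)⁻¹ * ∑ k : Fin K,
        ((2 : ℝ) ^ (np k * nm k))⁻¹ * ∑ σ : Fin (np k * nm k) → Bool,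
          ((np k * nm k : ℕ) : ℝ)⁻¹ * ∑ j : Fin (J k), w k j *
            ⨆ v : {v : H // ‖v‖ ≤ B}, ∑ i ∈ I k j,
              (if σ i then (1 : ℝ) else -1) * ⟪(v : H), Φ (xs k i).1 - Φ (xs k i).2⟫
      ≤ 2 * B * r / Real.sqrt n *
          ((K : ℝ)⁻¹ * ∑ k : Fin K, Real.sqrt (1 / ((min (np k) (nm k) : ℝ) / n))) := by
  classical
  haveI : Nonempty {v : H // ‖v‖ ≤ B} := ⟨⟨0, by simpa using hB⟩⟩
  have hΦn : ∀ x, ‖Φ x‖ ≤ r := by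
    intro x
    have h := hΦ x
    rw [real_inner_self_eq_norm_sq] at h
    nlinarith [norm_nonneg (Φ x)]
  -- reduce to a per-`k` inequality
  have hrhs : 2 * B * r / Real.sqrt n *
      ((K : ℝ)⁻¹ * ∑ k : Fin K, Real.sqrt (1 / ((min (np k) (nm k) : ℝ) / n)))
      = (K : ℝ)⁻¹ * ∑ k : Fin K,
          2 * B * r / Real.sqrt n * Real.sqrt (1 / ((min (np k) (nm k) : ℝ) / n)) := by
    calc 2 * B * r / Real.sqrt n *
        ((K : ℝ)⁻¹ * ∑ k : Fin K, Real.sqrt (1 / ((min (np k) (nm k) : ℝ) / n)))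
        = (K : ℝ)⁻¹ * (2 * B * r / Real.sqrt n *
            ∑ k : Fin K, Real.sqrt (1 / ((min (np k) (nm k) : ℝ) / n))) := by ring
      _ = _ := by rw [Finset.mul_sum]
  rw [hrhs]
  refine mul_le_mul_of_nonneg_left (Finset.sum_le_sum fun k _ => ?_) (by positivity)
  -- per-`k` bound
  set m := np k * nm k with hm
  set z : Fin m → H := fun i => Φ (xs k i).1 - Φ (xs k i).2 with hzdef
  have hz : ∀ i, ‖z i‖ ≤ 2 * r := by
    intro i
    calc ‖z i‖ ≤ ‖Φ (xs k i).1‖ + ‖Φ (xs k i).2‖ := norm_sub_le _ _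
      _ ≤ 2 * r := by have := hΦn (xs k i).1; have := hΦn (xs k i).2; linarith
  set S : (Fin m → Bool) → Fin (J k) → H :=
    fun σ j => ∑ i ∈ I k j, (if σ i then (1:ℝ) else -1) • z i with hS
  have hsup : ∀ σ j, (⨆ v : {v : H // ‖v‖ ≤ B}, ∑ i ∈ I k j,
      (if σ i then (1:ℝ) else -1) * ⟪(v:H), z i⟫) ≤ B * ‖S σ j‖ := by
    intro σ j
    refine ciSup_le fun v => ?_
    have heq : ∑ i ∈ I k j, (if σ i then (1:ℝ) else -1) * ⟪(v:H), z i⟫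
        = ⟪(v:H), S σ j⟫ := by
      rw [hS, inner_sum]
      exact Finset.sum_congr rfl fun i _ => (real_inner_smul_right _ _ _).symm
    rw [heq]
    calc ⟪(v:H), S σ j⟫ ≤ ‖(v:H)‖ * ‖S σ j‖ := real_inner_le_norm _ _
      _ ≤ B * ‖S σ j‖ := mul_le_mul_of_nonneg_right v.2 (norm_nonneg _)
  -- second moment
  have hmom : ∀ j, ∑ σ : Fin m → Bool, ‖S σ j‖ ^ 2
      = 2 ^ m * ∑ i ∈ I k j, ‖z i‖ ^ 2 := by
    intro j
    have hexp : ∀ σ : Fin m → Bool, ‖S σ j‖ ^ 2 = ∑ i ∈ I k j, ∑ i' ∈ I k j,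
        ((if σ i then (1:ℝ) else -1) * (if σ i' then (1:ℝ) else -1)) * ⟪z i, z i'⟫ := by
      intro σ
      rw [← real_inner_self_eq_norm_sq, hS]
      simp only [sum_inner, inner_sum, real_inner_smul_left, real_inner_smul_right]
      exact Finset.sum_congr rfl fun i _ => Finset.sum_congr rfl fun i' _ => by
        rw [real_inner_comm (z i') (z i)]; ring
    calc ∑ σ : Fin m → Bool, ‖S σ j‖ ^ 2
        = ∑ σ : Fin m → Bool, ∑ i ∈ I k j, ∑ i' ∈ I k j,
            ((if σ i then (1:ℝ) else -1) * (if σ i' then (1:ℝ) else -1)) * ⟪z i, z i'⟫ :=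
          Finset.sum_congr rfl fun σ _ => hexp σ
      _ = ∑ i ∈ I k j, ∑ i' ∈ I k j, ∑ σ : Fin m → Bool,
            ((if σ i then (1:ℝ) else -1) * (if σ i' then (1:ℝ) else -1)) * ⟪z i, z i'⟫ := by
          rw [Finset.sum_comm]
          exact Finset.sum_congr rfl fun i _ => Finset.sum_comm
      _ = ∑ i ∈ I k j, ∑ i' ∈ I k j, (∑ σ : Fin m → Bool,
            ((if σ i then (1:ℝ) else -1) * (if σ i' then (1:ℝ) else -1))) * ⟪z i, z i'⟫ := by
          exact Finset.sum_congr rfl fun i _ => Finset.sum_congr rfl fun i' _ =>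
            (Finset.sum_mul _ _ _).symm
      _ = ∑ i ∈ I k j, 2 ^ m * ⟪z i, z i⟫ := by
          refine Finset.sum_congr rfl fun i hi => ?_
          rw [Finset.sum_eq_single i]
          · rw [rad_diag]
          · intro i' _ hne
            rw [rad_orth (Ne.symm hne), zero_mul]
          · intro hni; exact absurd hi hni
      _ = 2 ^ m * ∑ i ∈ I k j, ‖z i‖ ^ 2 := by
          rw [Finset.mul_sum]
          exact Finset.sum_congr rfl fun i _ => by rw [real_inner_self_eq_norm_sq]
  -- average of norms
  have havg : ∀ j, ∑ σ : Fin m → Bool, ‖S σ j‖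
      ≤ 2 ^ m * (2 * r * Real.sqrt ((I k j).card)) := by
    intro j
    have h1 : ∑ σ : Fin m → Bool, ‖S σ j‖ ≤
        Real.sqrt (∑ _σ : Fin m → Bool, (1:ℝ) ^ 2) *
          Real.sqrt (∑ σ : Fin m → Bool, ‖S σ j‖ ^ 2) := by
      simpa using Real.sum_mul_le_sqrt_mul_sqrt Finset.univ (fun _ => (1:ℝ))
        (fun σ => ‖S σ j‖)
    have hcard : ∑ _σ : Fin m → Bool, (1:ℝ) ^ 2 = 2 ^ m := by
      simp [Finset.card_univ]
    have hZ : ∑ i ∈ I k j, ‖z i‖ ^ 2 ≤ ((I k j).card : ℝ) * (2 * r) ^ 2 := by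
      have := Finset.sum_le_card_nsmul (I k j) (fun i => ‖z i‖ ^ 2) ((2 * r) ^ 2)
        (fun i _ => pow_le_pow_left₀ (norm_nonneg _) (hz i) 2)
      simpa [nsmul_eq_mul] using this
    calc ∑ σ : Fin m → Bool, ‖S σ j‖
        ≤ Real.sqrt (∑ _σ : Fin m → Bool, (1:ℝ) ^ 2) *
            Real.sqrt (∑ σ : Fin m → Bool, ‖S σ j‖ ^ 2) := h1
      _ = Real.sqrt (2 ^ m) * Real.sqrt (2 ^ m * ∑ i ∈ I k j, ‖z i‖ ^ 2) := by
          rw [hcard, hmom j]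
      _ ≤ Real.sqrt (2 ^ m) * Real.sqrt (2 ^ m * (((I k j).card : ℝ) * (2 * r) ^ 2)) := by
          refine mul_le_mul_of_nonneg_left (Real.sqrt_le_sqrt ?_) (Real.sqrt_nonneg _)
          exact mul_le_mul_of_nonneg_left hZ (by positivity)
      _ = 2 ^ m * (2 * r * Real.sqrt ((I k j).card)) := by
          rw [Real.sqrt_mul (by positivity), Real.sqrt_mul (by positivity),
            ← mul_assoc, Real.mul_self_sqrt (by positivity),
            Real.sqrt_sq (by positivity)]
          ring
  -- double counting
  have hdouble : ∑ j : Fin (J k), w k j * ((I k j).card : ℝ) = (m : ℝ) := by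
    calc ∑ j : Fin (J k), w k j * ((I k j).card : ℝ)
        = ∑ j : Fin (J k), ∑ i ∈ I k j, w k j := by
          exact Finset.sum_congr rfl fun j _ => by
            rw [Finset.sum_const, nsmul_eq_mul, mul_comm]
      _ = ∑ j : Fin (J k), ∑ i : Fin m, if i ∈ I k j then w k j else 0 := by
          refine Finset.sum_congr rfl fun j _ => ?_
          rw [← Finset.sum_filter]
          congr 1
          ext i
          simp
      _ = ∑ i : Fin m, ∑ j : Fin (J k), if i ∈ I k j then w k j else 0 :=
          Finset.sum_comm
      _ = ∑ _i : Fin m, (1:ℝ) := by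
          refine Finset.sum_congr rfl fun i _ => ?_
          rw [← Finset.sum_filter]
          exact hcover k i
      _ = (m : ℝ) := by simp
  -- Cauchy–Schwarz over j
  have hCS : ∑ j : Fin (J k), w k j * Real.sqrt ((I k j).card)
      ≤ Real.sqrt ((max (np k) (nm k) : ℕ)) * Real.sqrt (m : ℝ) := by
    have h1 : ∀ j, w k j * Real.sqrt ((I k j).card)
        = Real.sqrt (w k j) * Real.sqrt (w k j * ((I k j).card : ℝ)) := by
      intro j
      rw [Real.sqrt_mul (hw k j).le, ← mul_assoc, Real.mul_self_sqrt (hw k j).le]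
    calc ∑ j : Fin (J k), w k j * Real.sqrt ((I k j).card)
        = ∑ j : Fin (J k), Real.sqrt (w k j) *
            Real.sqrt (w k j * ((I k j).card : ℝ)) :=
          Finset.sum_congr rfl fun j _ => h1 j
      _ ≤ Real.sqrt (∑ j : Fin (J k), w k j) *
            Real.sqrt (∑ j : Fin (J k), w k j * ((I k j).card : ℝ)) :=
          Real.sum_sqrt_mul_sqrt_le _ (fun j => (hw k j).le)
            (fun j => mul_nonneg (hw k j).le (Nat.cast_nonneg _))
      _ = Real.sqrt ((max (np k) (nm k) : ℕ)) * Real.sqrt (m : ℝ) := by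
          rw [hchrom k, hdouble, Nat.cast_max]
  -- positivity facts
  have hmpos : 0 < m := Nat.mul_pos (hnp k) (hnm k)
  have hmR : (0:ℝ) < (m : ℝ) := by exact_mod_cast hmpos
  have h2m : (0:ℝ) < (2:ℝ) ^ m := by positivity
  -- main chain for `k`
  have hmain : ((2 : ℝ) ^ m)⁻¹ * ∑ σ : Fin m → Bool,
      ((m : ℕ) : ℝ)⁻¹ * ∑ j : Fin (J k), w k j *
        (⨆ v : {v : H // ‖v‖ ≤ B}, ∑ i ∈ I k j,
          (if σ i then (1 : ℝ) else -1) * ⟪(v : H), z i⟫)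
      ≤ ((m:ℝ))⁻¹ * (2 * B * r *
          (Real.sqrt ((max (np k) (nm k) : ℕ)) * Real.sqrt (m : ℝ))) := by
    have step1 : ∑ σ : Fin m → Bool,
        ((m : ℕ) : ℝ)⁻¹ * ∑ j : Fin (J k), w k j *
          (⨆ v : {v : H // ‖v‖ ≤ B}, ∑ i ∈ I k j,
            (if σ i then (1 : ℝ) else -1) * ⟪(v : H), z i⟫)
        = ((m:ℝ))⁻¹ * ∑ j : Fin (J k), w k j * ∑ σ : Fin m → Bool,
            (⨆ v : {v : H // ‖v‖ ≤ B}, ∑ i ∈ I k j,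
              (if σ i then (1 : ℝ) else -1) * ⟪(v : H), z i⟫) := by
      rw [← Finset.mul_sum, Finset.sum_comm]
      congr 1
      refine Finset.sum_congr rfl fun j _ => ?_
      rw [Finset.mul_sum]
    rw [step1]
    have step2 : ∑ j : Fin (J k), w k j * ∑ σ : Fin m → Bool,
        (⨆ v : {v : H // ‖v‖ ≤ B}, ∑ i ∈ I k j,
          (if σ i then (1 : ℝ) else -1) * ⟪(v : H), z i⟫)
        ≤ ∑ j : Fin (J k), w k j * (2 ^ m * (B * (2 * r * Real.sqrt ((I k j).card)))) := by
      refine Finset.sum_le_sum fun j _ => ?_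
      refine mul_le_mul_of_nonneg_left ?_ (hw k j).le
      calc ∑ σ : Fin m → Bool,
          (⨆ v : {v : H // ‖v‖ ≤ B}, ∑ i ∈ I k j,
            (if σ i then (1 : ℝ) else -1) * ⟪(v : H), z i⟫)
          ≤ ∑ σ : Fin m → Bool, B * ‖S σ j‖ :=
            Finset.sum_le_sum fun σ _ => hsup σ j
        _ = B * ∑ σ : Fin m → Bool, ‖S σ j‖ := by rw [Finset.mul_sum]
        _ ≤ B * (2 ^ m * (2 * r * Real.sqrt ((I k j).card))) :=
            mul_le_mul_of_nonneg_left (havg j) hB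
        _ = 2 ^ m * (B * (2 * r * Real.sqrt ((I k j).card))) := by ring
    have step3 : ∑ j : Fin (J k), w k j * (2 ^ m * (B * (2 * r * Real.sqrt ((I k j).card))))
        = 2 ^ m * (2 * B * r * ∑ j : Fin (J k), w k j * Real.sqrt ((I k j).card)) := by
      rw [Finset.mul_sum, Finset.mul_sum]
      exact Finset.sum_congr rfl fun j _ => by ring
    have step4 : 2 * B * r * ∑ j : Fin (J k), w k j * Real.sqrt ((I k j).card)
        ≤ 2 * B * r * (Real.sqrt ((max (np k) (nm k) : ℕ)) * Real.sqrt (m : ℝ)) :=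
      mul_le_mul_of_nonneg_left hCS (by positivity)
    have hT : ∑ j : Fin (J k), w k j * ∑ σ : Fin m → Bool,
        (⨆ v : {v : H // ‖v‖ ≤ B}, ∑ i ∈ I k j,
          (if σ i then (1 : ℝ) else -1) * ⟪(v : H), z i⟫)
        ≤ 2 ^ m * (2 * B * r *
            (Real.sqrt ((max (np k) (nm k) : ℕ)) * Real.sqrt (m : ℝ))) := by
      refine step2.trans ?_
      rw [step3]
      exact mul_le_mul_of_nonneg_left step4 h2m.le
    calc ((2:ℝ)^m)⁻¹ * (((m:ℝ))⁻¹ * ∑ j : Fin (J k), w k j * ∑ σ : Fin m → Bool,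
          (⨆ v : {v : H // ‖v‖ ≤ B}, ∑ i ∈ I k j,
            (if σ i then (1 : ℝ) else -1) * ⟪(v : H), z i⟫))
        ≤ ((2:ℝ)^m)⁻¹ * (((m:ℝ))⁻¹ * (2 ^ m * (2 * B * r *
            (Real.sqrt ((max (np k) (nm k) : ℕ)) * Real.sqrt (m : ℝ))))) := by
          refine mul_le_mul_of_nonneg_left
            (mul_le_mul_of_nonneg_left hT (inv_nonneg.2 hmR.le)) (inv_nonneg.2 h2m.le)
      _ = ((m:ℝ))⁻¹ * (2 * B * r *
            (Real.sqrt ((max (np k) (nm k) : ℕ)) * Real.sqrt (m : ℝ))) := by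
          field_simp
  refine le_trans hmain ?_
  -- final arithmetic
  set a : ℝ := ((min (np k) (nm k) : ℕ) : ℝ) with ha
  set b : ℝ := ((max (np k) (nm k) : ℕ) : ℝ) with hb
  have hab : (m : ℝ) = a * b := by
    rw [ha, hb, ← Nat.cast_mul, min_mul_max]
  have hapos : (0:ℝ) < a := by
    rw [ha]; exact_mod_cast lt_of_lt_of_le Nat.zero_lt_one (le_min (hnp k) (hnm k))
  have hbpos : (0:ℝ) < b := by
    rw [hb]
    exact_mod_cast lt_of_lt_of_le Nat.zero_lt_one (le_trans (hnp k) (le_max_left _ _))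
  have hnpos : (0:ℝ) < (n:ℝ) := by exact_mod_cast lt_of_lt_of_le Nat.zero_lt_two hn
  have hsa : 0 < Real.sqrt a := Real.sqrt_pos.2 hapos
  have hsb : 0 < Real.sqrt b := Real.sqrt_pos.2 hbpos
  have hsn : 0 < Real.sqrt (n:ℝ) := Real.sqrt_pos.2 hnpos
  have h1 : (1:ℝ) / (a / (n:ℝ)) = (n:ℝ) / a := by field_simp
  have h2 : Real.sqrt ((n:ℝ) / a) = Real.sqrt (n:ℝ) / Real.sqrt a :=
    Real.sqrt_div (le_of_lt hnpos) a
  have hsab : Real.sqrt (m : ℝ) = Real.sqrt a * Real.sqrt b := by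
    rw [hab, Real.sqrt_mul hapos.le]
  have haa : Real.sqrt a * Real.sqrt a = a := Real.mul_self_sqrt hapos.le
  have hbb : Real.sqrt b * Real.sqrt b = b := Real.mul_self_sqrt hbpos.le
  refine le_of_eq ?_
  have hmin : ((np k : ℝ)) ⊓ ((nm k : ℝ)) = a := by
    rw [ha]; exact_mod_cast (Nat.cast_min (m := np k) (n := nm k)).symm
  rw [hmin, h1, h2, hsab, hab]
  have e1 : Real.sqrt b * (Real.sqrt a * Real.sqrt b) = Real.sqrt a * b := by
    calc Real.sqrt b * (Real.sqrt a * Real.sqrt b)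
        = Real.sqrt a * (Real.sqrt b * Real.sqrt b) := by ring
      _ = Real.sqrt a * b := by rw [hbb]
  rw [e1]
  field_simp
  linear_combination B * haa
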